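/- Let σ ∈ (0, 3/2), α > 0 and G(ε) = ∫₀^∞ ξ² (max(α − ε√(1+ξ²), 0))^{σ+1} dξ. There exist constants c₂ > c₁ > 0, independent of α, such that c₁ ε^{−3} α^{4+σ} ≤ G(ε) ≤ c₂ ε^{−3} α^{4+σ} for all ε ∈ (0, α/√2]. In particular G(ε) > 0 for ε ∈ (0, α), and G(ε) = 0 for ε ≥ α, so G is continuous on (0,∞). -/

import Mathlib

/-- `G(ε) = ∫₀^∞ ξ² (max(α − ε√(1+ξ²), 0))^{σ+1} dξ`. -/
noncomputable def Gfun (σ α ε : ℝ) : ℝ :=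
  ∫ ξ in Set.Ioi (0:ℝ), ξ ^ 2 * (max (α - ε * Real.sqrt (1 + ξ ^ 2)) 0) ^ (σ + 1)

open MeasureTheory Set

section helpers
variable {σ α ε : ℝ}

/-- The integrand. -/
noncomputable def fI (σ α ε : ℝ) : ℝ → ℝ :=
  fun ξ => ξ ^ 2 * (max (α - ε * Real.sqrt (1 + ξ ^ 2)) 0) ^ (σ + 1)

lemma Gfun_eq (σ α ε : ℝ) : True := trivial

lemma fI_nonneg (σ α ε : ℝ) (x : ℝ) : 0 ≤ fI σ α ε x :=
  mul_nonneg (sq_nonneg x) (Real.rpow_nonneg (le_max_right _ _) _)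

lemma cont_rpow (hσ : 0 < σ) : Continuous (fun x : ℝ => x ^ (σ + 1)) := by
  rw [continuous_iff_continuousAt]
  intro x
  exact Real.continuousAt_rpow_const x _ (Or.inr (by linarith))

lemma fI_cont (hσ : 0 < σ) : Continuous (fI σ α ε) := by
  apply Continuous.mul (by continuity)
  exact (cont_rpow hσ).comp
    (((continuous_const.sub (continuous_const.mul ((continuous_const.add
      (continuous_pow 2)).sqrt))).max continuous_const))

lemma sqrt_one_add_sq_le (x : ℝ) (hx : 0 ≤ x) : Real.sqrt (1 + x ^ 2) ≤ 1 + x := by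
  rw [show (1:ℝ) + x = Real.sqrt ((1+x)^2) by rw [Real.sqrt_sq (by linarith)]]
  apply Real.sqrt_le_sqrt; nlinarith

lemma fI_zero_of_ge (hσ : 0 < σ) (hε : 0 < ε) (hα : 0 < α) {x : ℝ} (hx : α / ε < x) :
    fI σ α ε x = 0 := by
  have hx0 : 0 < x := lt_trans (div_pos hα hε) hx
  have h1 : α < ε * x := by rw [div_lt_iff₀ hε] at hx; linarith
  have h2 : x ≤ Real.sqrt (1 + x ^ 2) := by
    rw [Real.le_sqrt hx0.le]
    all_goals nlinarith [sq_nonneg x]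
  have : α - ε * Real.sqrt (1 + x ^ 2) < 0 := by nlinarith
  rw [fI, max_eq_right this.le, Real.zero_rpow (by linarith), mul_zero]

lemma fI_le_indicator (hσ : 0 < σ) (hα : 0 < α) {c : ℝ} (hc : 0 < c) (hcε : c ≤ ε)
    {x : ℝ} (hx : x ∈ Ioi (0:ℝ)) :
    fI σ α ε x ≤ (Ioc 0 (α / c)).indicator (fun _ => (α / c) ^ 2 * α ^ (σ + 1)) x := by
  have hx0 : 0 < x := hx
  by_cases hxc : x ≤ α / c
  · rw [indicator_of_mem (Set.mem_Ioc.mpr ⟨hx0, hxc⟩)]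
    apply mul_le_mul
    · nlinarith
    · apply Real.rpow_le_rpow (le_max_right _ _) _ (by linarith)
      have : 0 ≤ ε * Real.sqrt (1 + x ^ 2) :=
        mul_nonneg (by linarith) (Real.sqrt_nonneg _)
      rw [max_le_iff]; constructor <;> [linarith; exact hα.le]
    · exact Real.rpow_nonneg (le_max_right _ _) _
    · positivity
  · push_neg at hxc
    rw [indicator_of_notMem (fun h => absurd h.2 (not_le.mpr hxc))]
    have hε' : 0 < ε := lt_of_lt_of_le hc hcε
    have : α / ε ≤ α / c := div_le_div_of_nonneg_left hα.le hc hcε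
    rw [fI_zero_of_ge hσ hε' hα (lt_of_le_of_lt this hxc)]

lemma indicator_integrable (hσ : 0 < σ) (hα : 0 < α) {c : ℝ} (hc : 0 < c) :
    Integrable ((Ioc 0 (α / c)).indicator (fun _ : ℝ => (α / c) ^ 2 * α ^ (σ + 1))) := by
  rw [integrable_indicator_iff measurableSet_Ioc]
  exact integrableOn_const measure_Ioc_lt_top.ne

lemma fI_integrableOn (hσ : 0 < σ) (hα : 0 < α) (hε : 0 < ε) :
    IntegrableOn (fI σ α ε) (Ioi 0) := by
  apply Integrable.mono' ((indicator_integrable hσ hα hε).integrableOn)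
    ((fI_cont hσ).aestronglyMeasurable)
  rw [ae_restrict_iff' measurableSet_Ioi]
  filter_upwards with x hx
  rw [Real.norm_of_nonneg (fI_nonneg σ α ε x)]
  exact fI_le_indicator hσ hα hε le_rfl hx

lemma lower_bound (hσ : 0 < σ) (hα : 0 < α) (hε : 0 < ε) {a b m : ℝ}
    (ha : 0 < a) (hab : a < b) (hm : 0 < m) (hb : ε * (1 + b) + m ≤ α) :
    (b - a) * (a ^ 2 * m ^ (σ + 1)) ≤ Gfun σ α ε := by
  have hGf : Gfun σ α ε = ∫ x in Ioi (0:ℝ), fI σ α ε x := rfl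
  have hsub : Ioc a b ⊆ Ioi (0:ℝ) := fun x hx => lt_trans ha hx.1
  have hint := fI_integrableOn hσ hα hε (α := α)
  have h1 : ∫ x in Ioc a b, fI σ α ε x ≤ ∫ x in Ioi (0:ℝ), fI σ α ε x := by
    apply setIntegral_mono_set hint
    · filter_upwards with x using fI_nonneg σ α ε x
    · exact HasSubset.Subset.eventuallyLE hsub
  have h2 : ∫ x in Ioc a b, (fun _ : ℝ => a ^ 2 * m ^ (σ + 1)) x
      ≤ ∫ x in Ioc a b, fI σ α ε x := by
    apply setIntegral_mono_on (integrableOn_const measure_Ioc_lt_top.ne)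
      (hint.mono_set hsub) measurableSet_Ioc
    intro x hx
    have hx0 : 0 < x := lt_trans ha hx.1
    have hs : Real.sqrt (1 + x ^ 2) ≤ 1 + x := sqrt_one_add_sq_le x hx0.le
    have hmle : m ≤ α - ε * Real.sqrt (1 + x ^ 2) := by
      nlinarith [mul_le_mul_of_nonneg_left hs hε.le,
        mul_le_mul_of_nonneg_left hx.2 hε.le]
    apply mul_le_mul
    · nlinarith [hx.1]
    · exact Real.rpow_le_rpow hm.le (le_trans hmle (le_max_left _ _)) (by linarith)
    · exact Real.rpow_nonneg hm.le _
    · positivity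
  calc (b - a) * (a ^ 2 * m ^ (σ + 1))
      = ∫ x in Ioc a b, (fun _ : ℝ => a ^ 2 * m ^ (σ + 1)) x := by
        rw [setIntegral_const, measureReal_def, Real.volume_Ioc, ENNReal.toReal_ofReal (by linarith),
          smul_eq_mul]
    _ ≤ Gfun σ α ε := by rw [hGf]; exact le_trans h2 h1

end helpers

section more
variable {σ α ε : ℝ}
open Real

lemma upper_bound (hσ : 0 < σ) (hα : 0 < α) (hε : 0 < ε) :
    Gfun σ α ε ≤ α ^ (σ + 1) * (α / ε) ^ 3 / 3 := by
  set R := α / ε with hRdef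
  have hR : 0 < R := div_pos hα hε
  have hGf : Gfun σ α ε = ∫ x in Ioi (0:ℝ), fI σ α ε x := rfl
  have hgint : IntegrableOn ((Ioc 0 R).indicator (fun x : ℝ => x ^ 2 * α ^ (σ + 1)))
      (Ioi 0) := by
    apply Integrable.integrableOn
    rw [integrable_indicator_iff measurableSet_Ioc]
    exact (Continuous.mul (by continuity) continuous_const).integrableOn_Ioc
  have h1 : ∫ x in Ioi (0:ℝ), fI σ α ε x
      ≤ ∫ x in Ioi (0:ℝ), (Ioc 0 R).indicator (fun x : ℝ => x ^ 2 * α ^ (σ + 1)) x := by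
    apply setIntegral_mono_on (fI_integrableOn hσ hα hε) hgint measurableSet_Ioi
    intro x hx
    by_cases hxR : x ≤ R
    · rw [indicator_of_mem (Set.mem_Ioc.mpr ⟨hx, hxR⟩)]
      apply mul_le_mul_of_nonneg_left _ (sq_nonneg x)
      apply Real.rpow_le_rpow (le_max_right _ _) _ (by linarith)
      have : 0 ≤ ε * Real.sqrt (1 + x ^ 2) := mul_nonneg hε.le (Real.sqrt_nonneg _)
      rw [max_le_iff]; exact ⟨by linarith, hα.le⟩
    · push_neg at hxR
      rw [indicator_of_notMem (fun h => absurd h.2 (not_le.mpr hxR)),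
        fI_zero_of_ge hσ hε hα hxR]
  have h2 : ∫ x in Ioi (0:ℝ), (Ioc 0 R).indicator (fun x : ℝ => x ^ 2 * α ^ (σ + 1)) x
      = α ^ (σ + 1) * R ^ 3 / 3 := by
    rw [setIntegral_indicator measurableSet_Ioc,
      Set.inter_eq_self_of_subset_right Set.Ioc_subset_Ioi_self,
      integral_mul_const, ← intervalIntegral.integral_of_le hR.le, integral_pow]
    norm_num; ring
  rw [hGf]; rw [h2] at h1; exact h1

lemma Gfun_zero (hσ : 0 < σ) (hα : 0 < α) (hαε : α ≤ ε) : Gfun σ α ε = 0 := by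
  have hε : 0 < ε := lt_of_lt_of_le hα hαε
  have key : ∀ ξ : ℝ, ξ ^ 2 * (max (α - ε * Real.sqrt (1 + ξ ^ 2)) 0) ^ (σ + 1) = 0 := by
    intro ξ
    have h1 : (1:ℝ) ≤ Real.sqrt (1 + ξ ^ 2) := by
      rw [Real.le_sqrt zero_le_one]
      all_goals nlinarith [sq_nonneg ξ]
    have h2 : α - ε * Real.sqrt (1 + ξ ^ 2) ≤ 0 := by nlinarith
    rw [max_eq_right h2, Real.zero_rpow (by linarith), mul_zero]
  unfold Gfun
  simp only [key, integral_zero]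

lemma Gfun_continuousAt (hσ : 0 < σ) (hα : 0 < α) {ε₀ : ℝ} (hε₀ : 0 < ε₀) :
    ContinuousAt (Gfun σ α) ε₀ := by
  have h2 : (0:ℝ) < ε₀ / 2 := by linarith
  have hGf : Gfun σ α = fun ε => ∫ x in Ioi (0:ℝ), fI σ α ε x := rfl
  rw [hGf]
  apply continuousAt_of_dominated
    (bound := (Ioc 0 (α / (ε₀/2))).indicator (fun _ => (α / (ε₀/2)) ^ 2 * α ^ (σ + 1)))
  · filter_upwards with ε
    exact (fI_cont hσ).aestronglyMeasurable
  · filter_upwards [eventually_gt_nhds (show ε₀/2 < ε₀ by linarith)] with ε hε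
    rw [ae_restrict_iff' measurableSet_Ioi]
    filter_upwards with x hx
    rw [Real.norm_of_nonneg (fI_nonneg σ α ε x)]
    exact fI_le_indicator hσ hα h2 hε.le hx
  · exact (indicator_integrable hσ hα h2).integrableOn
  · filter_upwards with x
    apply Continuous.continuousAt
    show Continuous fun ε => x ^ 2 * (max (α - ε * Real.sqrt (1 + x ^ 2)) 0) ^ (σ + 1)
    exact continuous_const.mul ((cont_rpow hσ).comp
      ((continuous_const.sub (continuous_id.mul continuous_const)).max continuous_const))

end more

/-- On `(0, α/√2]`, `G(ε) ∼ ε^{−3} α^{4+σ}` with α-independent constants; moreover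
`G > 0` on `(0,α)`, `G = 0` on `[α,∞)`, and `G` is continuous on `(0,∞)`. -/
theorem stmt_10 (σ : ℝ) (hσ : σ ∈ Set.Ioo (0:ℝ) (3/2)) :
    (∃ c₁ c₂ : ℝ, 0 < c₁ ∧ c₁ < c₂ ∧ ∀ α : ℝ, 0 < α →
      ∀ ε ∈ Set.Ioc (0:ℝ) (α / Real.sqrt 2),
        c₁ * ε ^ (-(3:ℝ)) * α ^ (4 + σ) ≤ Gfun σ α ε ∧
        Gfun σ α ε ≤ c₂ * ε ^ (-(3:ℝ)) * α ^ (4 + σ)) ∧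
    (∀ α : ℝ, 0 < α → ∀ ε ∈ Set.Ioo (0:ℝ) α, 0 < Gfun σ α ε) ∧
    (∀ α : ℝ, 0 < α → ∀ ε : ℝ, α ≤ ε → Gfun σ α ε = 0) ∧
    (∀ α : ℝ, 0 < α → ContinuousOn (Gfun σ α) (Set.Ioi 0)) := by
  obtain ⟨hσ0, hσ2⟩ := hσ
  have hσ1 : (0:ℝ) < σ + 1 := by linarith
  set c₀ : ℝ := 3/4 - Real.sqrt 2 / 2 with hc₀def
  have hs2 : Real.sqrt 2 < 3/2 := by
    rw [Real.sqrt_lt' (by norm_num)]; norm_num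
  have hs2' : (0:ℝ) < Real.sqrt 2 := Real.sqrt_pos.mpr (by norm_num)
  have hs2sq : Real.sqrt 2 ^ 2 = 2 := Real.sq_sqrt (by norm_num)
  have hc₀ : 0 < c₀ := by rw [hc₀def]; linarith
  have hc₀1 : c₀ ≤ 1 := by rw [hc₀def]; linarith
  -- exponent identities
  have powA : ∀ a : ℝ, 0 < a → a ^ (4 + σ) = a ^ (σ + 1) * a ^ (3:ℕ) := by
    intro a ha
    rw [show (4 + σ) = (σ + 1) + ((3:ℕ):ℝ) by push_cast; ring,
      Real.rpow_add ha, Real.rpow_natCast]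
  have powB : ∀ e : ℝ, 0 < e → e ^ (-(3:ℝ)) = (e ^ (3:ℕ))⁻¹ := by
    intro e he
    rw [show (-(3:ℝ)) = -((3:ℕ):ℝ) by norm_num, Real.rpow_neg he.le, Real.rpow_natCast]
  refine ⟨⟨c₀ ^ (σ + 1) / 512, 1/3, by positivity, ?_, ?_⟩, ?_, ?_, ?_⟩
  · -- c₁ < c₂
    have := Real.rpow_le_one hc₀.le hc₀1 hσ1.le
    linarith
  · -- main bounds
    intro α hα ε hε
    obtain ⟨hε0, hεs⟩ := hε
    have hεα : ε * Real.sqrt 2 ≤ α := (le_div_iff₀ hs2').mp hεs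
    have hεle : ε ≤ α * Real.sqrt 2 / 2 := by
      nlinarith [mul_le_mul_of_nonneg_right hεα (Real.sqrt_nonneg 2)]
    constructor
    · -- lower
      have hab : α / (8 * ε) < α / (4 * ε) := by
        apply div_lt_div_of_pos_left hα (by positivity); linarith
      have key := lower_bound hσ0 hα hε0 (a := α / (8 * ε)) (b := α / (4 * ε))
        (m := c₀ * α) (by positivity) hab (by positivity)
        (by
          have heq : ε * (1 + α / (4 * ε)) = ε + α / 4 := by field_simp
          rw [hc₀def, heq]; linarith)
      refine le_trans (le_of_eq ?_) key
      rw [powA α hα, powB ε hε0, Real.mul_rpow hc₀.le hα.le]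
      field_simp
      ring
    · -- upper
      refine le_trans (upper_bound hσ0 hα hε0) (le_of_eq ?_)
      rw [powA α hα, powB ε hε0, div_pow]
      field_simp
  · -- positivity
    intro α hα ε hε
    obtain ⟨hε0, hεα⟩ := hε
    set m : ℝ := (α - ε) / 2 with hmdef
    have hm : 0 < m := by rw [hmdef]; linarith
    have key := lower_bound hσ0 hα hε0 (a := m / (2 * ε)) (b := m / ε)
      (m := m) (by positivity)
      (div_lt_div_of_pos_left hm (by positivity) (by linarith)) hm
      (by
        have heq : ε * (1 + m / ε) = ε + m := by field_simp
        rw [heq, hmdef]; linarith)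
    refine lt_of_lt_of_le ?_ key
    have h1 : 0 < m / ε - m / (2 * ε) := by
      rw [sub_pos]
      exact div_lt_div_of_pos_left hm (by positivity) (by linarith)
    positivity
  · -- zero
    intro α hα ε hαε
    exact Gfun_zero hσ0 hα hαε
  · -- continuity
    intro α hα ε hε
    exact (Gfun_continuousAt hσ0 hα hε).continuousWithinAt
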